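/- arXiv:1512.02825 — 2 statements merged into one kernel-verified Lean document; each statement's English description precedes it below -/
import Mathlib

section
/- Pointwise algebraic Picone identity: for vectors X, Y in R^n, real numbers u, and v > 0, with p > 1 and g : (0,∞) → (0,∞) differentiable satisfying g'(v) ≥ (p-1)·g(v)^((p-2)/(p-1)), the quantity L = |X|^p - p·(|u|^(p-2)·u/g(v))·⟨X,Y⟩·|Y|^(p-2) + (g'(v)·|u|^p/g(v)^2)·|Y|^p is nonnegative. -/
/-- Pointwise algebraic Picone identity: for vectors `X, Y ∈ ℝⁿ`, `u ∈ ℝ`, `v > 0`,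
`p > 1` and `g` differentiable at `v` with `g v > 0` and
`g' v ≥ (p-1) * (g v)^((p-2)/(p-1))`, the quantity
`L = |X|^p - p (|u|^(p-2) u / g v) ⟨X,Y⟩ |Y|^(p-2) + (g' v |u|^p / (g v)^2) |Y|^p`
is nonnegative. -/
theorem stmt_4 (n : ℕ) (p : ℝ) (hp : 1 < p)
    (X Y : EuclideanSpace ℝ (Fin n)) (u v : ℝ) (hv : 0 < v)
    (g : ℝ → ℝ) (hgd : DifferentiableAt ℝ g v) (hgpos : 0 < g v)
    (hg' : deriv g v ≥ (p - 1) * (g v) ^ ((p - 2) / (p - 1))) :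
    0 ≤ ‖X‖ ^ p
        - p * (|u| ^ (p - 2) * u / g v) * (inner ℝ X Y : ℝ) * ‖Y‖ ^ (p - 2)
        + (deriv g v * |u| ^ p / (g v) ^ 2) * ‖Y‖ ^ p := by
  have hp0 : (0:ℝ) < p := by linarith
  have hp1 : (0:ℝ) < p - 1 := by linarith
  have ha0 : (0:ℝ) ≤ ‖X‖ := norm_nonneg X
  set G := g v with hGdef
  set D := deriv g v with hDdef
  by_cases hY : Y = 0
  · subst hY
    simp only [inner_zero_right, norm_zero, mul_zero, zero_mul, sub_zero,
      Real.zero_rpow hp0.ne']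
    simpa using Real.rpow_nonneg ha0 p
  by_cases hu : u = 0
  · subst hu
    simp only [abs_zero, Real.zero_rpow hp0.ne', mul_zero, zero_mul, zero_div,
      mul_zero, sub_zero, div_zero, zero_mul]
    have : |(0:ℝ)| ^ (p-2) * 0 = 0 := by ring
    simp [this]
    positivity
  -- main case
  have hbpos : 0 < ‖Y‖ := norm_pos_iff.mpr hY
  have htpos : 0 < |u| := abs_pos.mpr hu
  set a := ‖X‖ with hadef
  set b := ‖Y‖ with hbdef
  set t := |u| with htdef
  set s := t * b / G ^ ((p-1)⁻¹) with hsdef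
  have hGpow : (0:ℝ) < G ^ ((p-1)⁻¹) := Real.rpow_pos_of_pos hgpos _
  have hs : 0 < s := by positivity
  have hs1 : s ^ (p-1) = t ^ (p-1) * b ^ (p-1) / G := by
    rw [hsdef, Real.div_rpow (by positivity) hGpow.le, Real.mul_rpow htpos.le hbpos.le,
      ← Real.rpow_mul hgpos.le, inv_mul_cancel₀ hp1.ne', Real.rpow_one]
  have hs2 : s ^ p = t ^ p * b ^ p / G ^ (p / (p-1)) := by
    rw [hsdef, Real.div_rpow (by positivity) hGpow.le, Real.mul_rpow htpos.le hbpos.le,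
      ← Real.rpow_mul hgpos.le]
    congr 2
    field_simp
  have htt : t ^ (p-2) * t = t ^ (p-1) := by
    rw [← Real.rpow_add_one htpos.ne' (p-2)]
    congr 1; ring
  have hbb : b ^ (p-2) * b = b ^ (p-1) := by
    rw [← Real.rpow_add_one hbpos.ne' (p-2)]
    congr 1; ring
  -- Step 1: bound on the middle term
  have hinner : u * (inner ℝ X Y : ℝ) ≤ t * (a * b) := by
    calc u * (inner ℝ X Y : ℝ) ≤ |u * (inner ℝ X Y : ℝ)| := le_abs_self _
      _ = t * |(inner ℝ X Y : ℝ)| := by rw [abs_mul]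
      _ ≤ t * (a * b) := by
          exact mul_le_mul_of_nonneg_left (abs_real_inner_le_norm X Y) htpos.le
  have h1 : p * (t ^ (p-2) * u / G) * (inner ℝ X Y : ℝ) * b ^ (p-2)
      ≤ p * a * s ^ (p-1) := by
    have hc : (0:ℝ) ≤ p / G * b ^ (p-2) * t ^ (p-2) := by positivity
    have step : p / G * b ^ (p-2) * t ^ (p-2) * (u * (inner ℝ X Y : ℝ))
        ≤ p / G * b ^ (p-2) * t ^ (p-2) * (t * (a * b)) :=
      mul_le_mul_of_nonneg_left hinner hc
    calc p * (t ^ (p-2) * u / G) * (inner ℝ X Y : ℝ) * b ^ (p-2)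
        = p / G * b ^ (p-2) * t ^ (p-2) * (u * (inner ℝ X Y : ℝ)) := by ring
      _ ≤ p / G * b ^ (p-2) * t ^ (p-2) * (t * (a * b)) := step
      _ = (t ^ (p-2) * t) * (b ^ (p-2) * b) * (p * a / G) := by ring
      _ = p * a * s ^ (p-1) := by rw [htt, hbb, hs1]; ring
  -- Step 2: bound on the last term
  have hGmul : G ^ ((p-2)/(p-1)) * G ^ (p/(p-1)) = G ^ (2:ℕ) := by
    rw [← Real.rpow_add hgpos]
    have h2e : (p-2)/(p-1) + p/(p-1) = (2:ℝ) := by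
      field_simp
      ring
    rw [h2e, show ((2:ℝ) = ((2:ℕ):ℝ)) by norm_num, Real.rpow_natCast]
  have h2 : (p-1) * s ^ p ≤ D * t ^ p / G ^ 2 * b ^ p := by
    have hk : (0:ℝ) ≤ t ^ p / G ^ 2 * b ^ p := by positivity
    have step := mul_le_mul_of_nonneg_right hg' hk
    have hGq : (0:ℝ) < G ^ (p/(p-1)) := Real.rpow_pos_of_pos hgpos _
    calc (p-1) * s ^ p
        = (p-1) * G ^ ((p-2)/(p-1)) * (t ^ p / G ^ 2 * b ^ p) := by
          rw [hs2, show G ^ ((p-2)/(p-1)) = G ^ 2 / G ^ (p/(p-1)) from by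
            rw [eq_div_iff hGq.ne']; exact hGmul]
          field_simp
      _ ≤ D * (t ^ p / G ^ 2 * b ^ p) := step
      _ = D * t ^ p / G ^ 2 * b ^ p := by ring
  -- Step 3: Young's inequality
  have h3 : p * a * s ^ (p-1) ≤ a ^ p + (p-1) * s ^ p := by
    have hq : p.HolderConjugate (p/(p-1)) := (Real.holderConjugate_iff_eq_conjExponent hp).mpr rfl
    have hy := Real.young_inequality_of_nonneg ha0 (Real.rpow_nonneg hs.le (p-1)) hq
    have hsp : (s ^ (p-1)) ^ (p/(p-1)) = s ^ p := by
      rw [← Real.rpow_mul hs.le]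
      congr 1
      field_simp
    rw [hsp, div_div_eq_mul_div] at hy
    calc p * a * s ^ (p-1) = p * (a * s ^ (p-1)) := by ring
      _ ≤ p * (a ^ p / p + s ^ p * (p-1) / p) := mul_le_mul_of_nonneg_left hy hp0.le
      _ = a ^ p + (p-1) * s ^ p := by field_simp
  linarith [h1, h2, h3]
end

section
/- Equality case of the pointwise Picone expression for g(v) = v^(p-1): if X, Y ∈ R^n, u ∈ R, v > 0, p > 1, and |X|^p - p·(|u|^(p-2)u/v^(p-1))·⟨X,Y⟩·|Y|^(p-2) + (p-1)·(|u|^p/v^p)·|Y|^p = 0, then X = (u/v)·Y. -/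
lemma young_strict {p a b : ℝ} (hp : 1 < p) (ha : 0 ≤ a) (hb : 0 ≤ b) (hab : a ≠ b) :
    p * a * b ^ (p - 1) < a ^ p + (p - 1) * b ^ p := by
  rcases eq_or_lt_of_le hb with rfl | hb
  · have ha' : 0 < a := ha.lt_of_ne (Ne.symm hab)
    rw [Real.zero_rpow (by linarith : p - 1 ≠ 0), Real.zero_rpow (by positivity : p ≠ 0)]
    simpa using Real.rpow_pos_of_pos ha' p
  · have hs : -1 ≤ a / b - 1 := by
      have : 0 ≤ a / b := div_nonneg ha hb.le
      linarith
    have hs' : a / b - 1 ≠ 0 := by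
      intro hcon
      apply hab
      field_simp at hcon
      linarith
    have h1 := one_add_mul_self_lt_rpow_one_add hs hs' hp
    rw [show 1 + (a / b - 1) = a / b by ring, Real.div_rpow ha hb.le] at h1
    have hbp : (0:ℝ) < b ^ p := Real.rpow_pos_of_pos hb p
    have h3 : b ^ (p - 1) = b ^ p / b := by
      rw [Real.rpow_sub hb, Real.rpow_one]
    rw [h3]
    rw [lt_div_iff₀ hbp] at h1
    have hb' := hb.ne'
    have e : (1 + p * (a / b - 1)) * b ^ p = p * a * (b ^ p / b) - (p - 1) * b ^ p := by
      field_simp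
      ring
    rw [e] at h1
    linarith

lemma rpow_succ' {x : ℝ} (hx : 0 < x) (q : ℝ) : x ^ q * x = x ^ (q + 1) := by
  rw [Real.rpow_add hx, Real.rpow_one]

/-- Equality case of the pointwise Picone expression for `g v = v^(p-1)`:
if the Picone expression vanishes then `v • X = u • Y`, i.e. `X = (u/v) • Y`. -/
theorem stmt_6 (n : ℕ) (p : ℝ) (hp : 1 < p)
    (X Y : EuclideanSpace ℝ (Fin n)) (u v : ℝ) (hv : 0 < v)
    (h : ‖X‖ ^ p
        - p * (|u| ^ (p - 2) * u / v ^ (p - 1)) * (inner ℝ X Y : ℝ) * ‖Y‖ ^ (p - 2)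
        + (p - 1) * (|u| ^ p / v ^ p) * ‖Y‖ ^ p = 0) :
    X = (u / v) • Y := by
  have hp0 : p ≠ 0 := by linarith
  by_cases hY : Y = 0
  · subst hY
    simp only [inner_zero_right, norm_zero, Real.zero_rpow hp0, mul_zero, zero_mul,
      sub_zero, add_zero, smul_zero] at h ⊢
    exact norm_eq_zero.mp ((Real.rpow_eq_zero (norm_nonneg X) hp0).mp h)
  by_cases hu : u = 0
  · subst hu
    simp only [abs_zero, mul_zero, zero_mul, zero_div, mul_zero, zero_mul, sub_zero,
      Real.zero_rpow hp0, zero_div, mul_zero, zero_mul, add_zero, zero_div, zero_smul] at h ⊢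
    exact norm_eq_zero.mp ((Real.rpow_eq_zero (norm_nonneg X) hp0).mp h)
  -- main case
  set A := ‖X‖ with hA_def
  set B := ‖Y‖ with hB_def
  set I := (inner ℝ X Y : ℝ) with hI_def
  have hau : 0 < |u| := abs_pos.mpr hu
  have hB : 0 < B := norm_pos_iff.mpr hY
  have hA0 : 0 ≤ A := norm_nonneg X
  set c : ℝ := |u| / v with hc_def
  have hc : 0 < c := div_pos hau hv
  set t : ℝ := |u| ^ (p - 2) * u / v ^ (p - 1) with ht_def
  have hvp1 : (0:ℝ) < v ^ (p - 1) := Real.rpow_pos_of_pos hv _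
  have haup2 : (0:ℝ) < |u| ^ (p - 2) := Real.rpow_pos_of_pos hau _
  have habs_t : |t| = c ^ (p - 1) := by
    rw [ht_def, abs_div, abs_mul, abs_of_pos haup2, abs_of_pos hvp1, hc_def,
      Real.div_rpow (abs_nonneg u) hv.le]
    congr 1
    rw [show p - 1 = p - 2 + 1 by ring, ← rpow_succ' hau]
  have hkey : t * I ≤ c ^ (p - 1) * (A * B) := by
    calc t * I ≤ |t * I| := le_abs_self _
    _ = |t| * |I| := abs_mul t I
    _ ≤ |t| * (A * B) := by
        apply mul_le_mul_of_nonneg_left (abs_real_inner_le_norm X Y) (abs_nonneg t)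
    _ = c ^ (p - 1) * (A * B) := by rw [habs_t]
  have hcp : |u| ^ p / v ^ p = c ^ p := by
    rw [hc_def, Real.div_rpow (abs_nonneg u) hv.le]
  have hBp2 : (0:ℝ) < B ^ (p - 2) := Real.rpow_pos_of_pos hB _
  have hcB : (0:ℝ) < c * B := mul_pos hc hB
  have hcBp1 : (c * B) ^ (p - 1) = c ^ (p - 1) * (B ^ (p - 2) * B) := by
    rw [Real.mul_rpow hc.le hB.le]
    congr 1
    rw [show p - 1 = p - 2 + 1 by ring, ← rpow_succ' hB]
  have hexp : A ^ p - p * t * I * B ^ (p - 2) + (p - 1) * (|u| ^ p / v ^ p) * B ^ p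
      = (A ^ p - p * A * (c * B) ^ (p - 1) + (p - 1) * (c * B) ^ p)
        + p * (c ^ (p - 1) * (A * B) - t * I) * B ^ (p - 2) := by
    rw [hcp, hcBp1, Real.mul_rpow hc.le hB.le]
    ring
  have hF : A ^ p - p * A * (c * B) ^ (p - 1) + (p - 1) * (c * B) ^ p ≤ 0 := by
    rw [hexp] at h
    have : 0 ≤ p * (c ^ (p - 1) * (A * B) - t * I) * B ^ (p - 2) := by
      apply mul_nonneg (mul_nonneg (by linarith) (by linarith)) hBp2.le
    linarith
  have hAcB : A = c * B := by
    by_contra hne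
    exact absurd hF (not_le.mpr (by linarith [young_strict hp hA0 hcB.le hne]))
  have hF0 : A ^ p - p * A * (c * B) ^ (p - 1) + (p - 1) * (c * B) ^ p = 0 := by
    rw [hAcB]
    have h5 : (c * B) * (c * B) ^ (p - 1) = (c * B) ^ p := by
      rw [mul_comm, rpow_succ' hcB, show p - 1 + 1 = p by ring]
    nlinarith [h5]
  have heq : t * I = c ^ (p - 1) * (A * B) := by
    rw [hexp, hF0, zero_add] at h
    rcases mul_eq_zero.mp h with h4 | h4
    · rcases mul_eq_zero.mp h4 with h5 | h5
      · exact absurd h5 (by positivity)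
      · linarith
    · exact absurd h4 hBp2.ne'
  -- derive I = (u/v) * B^2
  have hut : u * t = |u| ^ p / v ^ (p - 1) := by
    rw [ht_def]
    rw [show |u| ^ p = |u| ^ (p - 2) * |u| ^ (2:ℝ) by
      rw [← Real.rpow_add hau]; ring_nf]
    rw [show |u| ^ (2:ℝ) = u ^ 2 by
      rw [show (2:ℝ) = ((2:ℕ):ℝ) by norm_num, Real.rpow_natCast, sq_abs]]
    field_simp
  have hup : (0:ℝ) < |u| ^ p := Real.rpow_pos_of_pos hau p
  have hvpp : v ^ p = v ^ (p - 1) * v := by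
    rw [rpow_succ' hv, show p - 1 + 1 = p by ring]
  have hI_val : I = (u / v) * B ^ 2 := by
    have h6 : u * (t * I) = u * (c ^ (p - 1) * (A * B)) := by rw [heq]
    rw [← mul_assoc, hut, hAcB] at h6
    -- h6 : |u|^p / v^(p-1) * I = u * (c^(p-1) * (c * B * B))
    have h7 : c ^ (p - 1) * c = c ^ p := by
      rw [rpow_succ' hc, show p - 1 + 1 = p by ring]
    have h8 : c ^ p = |u| ^ p / v ^ p := hcp.symm
    rw [show c ^ (p - 1) * (c * B * B) = (c ^ (p - 1) * c) * (B * B) by ring, h7, h8, hvpp] at h6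
    set M := |u| ^ p with hM_def
    set W := v ^ (p - 1) with hW_def
    have hM : M ≠ 0 := hup.ne'
    have hW : W ≠ 0 := hvp1.ne'
    have hv' : v ≠ 0 := hv.ne'
    have h9 : M * (I * v) = M * (u * (B * B)) := by
      have e1 : (M / W * I) * (W * v) = M * (I * v) := by field_simp
      have e2 : (u * (M / (W * v) * (B * B))) * (W * v) = M * (u * (B * B)) := by
        field_simp
      rw [← e1, ← e2, h6]
    have h10 : I * v = u * (B * B) := mul_left_cancel₀ hM h9
    field_simp
    linarith [h10]
  -- conclude
  have hfinal : ‖X - (u / v) • Y‖ ^ 2 = 0 := by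
    rw [norm_sub_sq_real, real_inner_smul_right, norm_smul, Real.norm_eq_abs, ← hI_def,
      ← hB_def, ← hA_def, hI_val, hAcB]
    have hc2 : c ^ 2 = (u / v) ^ 2 := by
      rw [hc_def, div_pow, div_pow, sq_abs]
    have habs2 : |u / v| ^ 2 = (u / v) ^ 2 := sq_abs _
    linear_combination (B ^ 2) * hc2 + (B ^ 2) * habs2
  have := norm_eq_zero.mp (pow_eq_zero_iff (n := 2) (by norm_num) |>.mp hfinal)
  exact sub_eq_zero.mp this
end
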